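/- Let p ≥ 1, L = (L₁,…,L_p) positive, f ∈ F^coord_{0,L}(ℝ^d), x₀ ∈ ℝ^d, and x_* a global minimizer of f with minimal value f_* = f(x_*). Define θ₀ = 1/p and θ_i = (√(θ_{i−1}⁴ + 4θ_{i−1}²) − θ_{i−1}²)/2 for i ≥ 1. For a block sequence σ ∈ {1,…,p}^N, define iterates x₀^σ = z₀^σ = x₀ and, for i = 1,…,N with ℓ = σ(i): y_{i−1}^σ = (1−θ_{i−1}) x_{i−1}^σ + θ_{i−1} z_{i−1}^σ; z_i^σ = z_{i−1}^σ − (1/(p θ_{i−1} L_ℓ)) U_ℓ ∇^{(ℓ)} f(y_{i−1}^σ); x_i^σ = y_{i−1}^σ + p θ_{i−1} (z_i^σ − z_{i−1}^σ). Then the uniform average over all block sequences satisfies p^{−N} Σ_{σ ∈ {1,…,p}^N} ( f(x_N^σ) − f_* ) ≤ (4p²/(N − 1 + 2p)²) · R², where R² = (1 − 1/p)(f(x₀) − f_*) + (1/2)‖x₀ − x_*‖_L². (This is the expected guarantee for N steps of random accelerated coordinate descent with step sizes 1/L_ℓ and uniformly sampled blocks.) -/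

import Mathlib

set_option maxHeartbeats 1000000

open RealInnerProductSpace

noncomputable section

/-- The `ℓ`-th block `ℝ^{d_ℓ}` of the decomposition `ℝ^d = ℝ^{d_1} × … × ℝ^{d_p}`. -/
abbrev Blk {p : ℕ} (d : Fin p → ℕ) (ℓ : Fin p) : Type := EuclideanSpace ℝ (Fin (d ℓ))

/-- The space `ℝ^d = ℝ^{d_1} × … × ℝ^{d_p}` with the Euclidean (ℓ²) norm. -/
abbrev Sp {p : ℕ} (d : Fin p → ℕ) : Type := PiLp 2 (Blk d)

/-- The selection embedding `U_ℓ : ℝ^{d_ℓ} → ℝ^d` placing `h` in block `ℓ` and `0` elsewhere. -/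
def inj {p : ℕ} (d : Fin p → ℕ) (ℓ : Fin p) (h : Blk d ℓ) : Sp d :=
  (WithLp.equiv 2 (∀ ℓ, Blk d ℓ)).symm (Pi.single ℓ h)

/-- Membership in the class `F^coord_{0,L}(ℝ^d)`: convex, differentiable, and for each block
`ℓ` the partial gradient `∇^{(ℓ)} f` is `L_ℓ`-Lipschitz along the block `ℓ`. -/
def IsCoordSmooth {p : ℕ} (d : Fin p → ℕ) (L : Fin p → ℝ) (f : Sp d → ℝ) : Prop :=
  ConvexOn ℝ Set.univ f ∧ Differentiable ℝ f ∧
    ∀ (ℓ : Fin p) (x : Sp d) (h : Blk d ℓ),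
      ‖gradient f (x + inj d ℓ h) ℓ - gradient f x ℓ‖ ≤ L ℓ * ‖h‖


lemma inj_apply {p : ℕ} (d : Fin p → ℕ) (ℓ : Fin p) (h : Blk d ℓ) (j : Fin p) :
    inj d ℓ h j = Pi.single ℓ h j := rfl

lemma inj_smul {p : ℕ} (d : Fin p → ℕ) (ℓ : Fin p) (c : ℝ) (h : Blk d ℓ) :
    inj d ℓ (c • h) = c • inj d ℓ h := by
  refine PiLp.ext fun j => ?_
  simp [inj_apply, Pi.single_smul]

lemma inner_inj {p : ℕ} (d : Fin p → ℕ) (ℓ : Fin p) (h : Blk d ℓ) (v : Sp d) :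
    ⟪inj d ℓ h, v⟫ = ⟪h, v ℓ⟫ := by
  rw [PiLp.inner_apply]
  rw [Finset.sum_eq_single ℓ]
  · simp [inj_apply]
  · intro j _ hj
    simp [inj_apply, Pi.single_eq_of_ne hj]
  · simp

lemma sum_inj {p : ℕ} (d : Fin p → ℕ) (v : Sp d) :
    ∑ ℓ, inj d ℓ (v ℓ) = v := by
  refine PiLp.ext fun j => ?_
  rw [WithLp.ofLp_sum, Finset.sum_apply]
  rw [Finset.sum_eq_single j]
  · simp [inj_apply]
  · intro ℓ _ hℓ
    simp [inj_apply, Pi.single_eq_of_ne (Ne.symm hℓ)]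
  · simp

lemma Dq_update {p : ℕ} {d : Fin p → ℕ} (L : Fin p → ℝ) (xs u : Sp d) (ℓ : Fin p)
    (c : ℝ) (g : Blk d ℓ) :
    ∑ j, L j * ‖(u - c • inj d ℓ g) j - xs j‖ ^ 2
      = (∑ j, L j * ‖u j - xs j‖ ^ 2)
        - 2 * c * L ℓ * ⟪g, u ℓ - xs ℓ⟫ + c ^ 2 * L ℓ * ‖g‖ ^ 2 := by
  have key : ∀ j, L j * ‖(u - c • inj d ℓ g) j - xs j‖ ^ 2
      = L j * ‖u j - xs j‖ ^ 2
        + (if j = ℓ then - 2 * c * L ℓ * ⟪g, u ℓ - xs ℓ⟫ + c ^ 2 * L ℓ * ‖g‖ ^ 2 else 0) := by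
    intro j
    by_cases hj : j = ℓ
    · subst hj
      have happ : (u - c • inj d j g) j = u j - c • g := by
        have h0 : (u - c • inj d j g) j = u j - c • (inj d j g j) := rfl
        rw [h0, inj_apply, Pi.single_eq_same]
      rw [happ, if_pos rfl]
      have : u j - c • g - xs j = (u j - xs j) - c • g := by abel
      rw [this, norm_sub_sq_real, real_inner_smul_right, norm_smul]
      simp only [Real.norm_eq_abs]
      rw [real_inner_comm]
      rw [mul_pow, sq_abs]
      ring
    · have happ : (u - c • inj d ℓ g) j = u j := by
        have : (u - c • inj d ℓ g) j = u j - c • (inj d ℓ g j) := rfl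
        rw [this, inj_apply, Pi.single_eq_of_ne hj]
        simp
      rw [happ, if_neg hj, add_zero]
  rw [Finset.sum_congr rfl (fun j _ => key j), Finset.sum_add_distrib, Finset.sum_ite_eq' Finset.univ ℓ]
  simp
  ring

section gen
variable {E : Type*} [NormedAddCommGroup E] [InnerProductSpace ℝ E] [CompleteSpace E]

lemma hasDerivAt_line (f : E → ℝ) (hdiff : Differentiable ℝ f) (a c : E) (t : ℝ) :
    HasDerivAt (fun s : ℝ => f (a + s • c)) ⟪gradient f (a + t • c), c⟫ t := by
  have h1 : HasFDerivAt f (InnerProductSpace.toDual ℝ E (gradient f (a + t • c))) (a + t • c) :=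
    (hdiff (a + t • c)).hasGradientAt.hasFDerivAt
  have h2 : HasDerivAt (fun s : ℝ => a + s • c) c t := by
    simpa using ((hasDerivAt_id t).smul_const c).const_add a
  simpa [InnerProductSpace.toDual_apply_apply, Function.comp_def] using h1.comp_hasDerivAt t h2

lemma grad_convex_le {f : E → ℝ} (hconv : ConvexOn ℝ Set.univ f)
    (hdiff : Differentiable ℝ f) (a b : E) :
    f a + ⟪gradient f a, b - a⟫ ≤ f b := by
  set c := b - a with hc
  have hg : ∀ t : ℝ, HasDerivAt (fun s : ℝ => f (a + s • c)) ⟪gradient f (a + t • c), c⟫ t :=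
    hasDerivAt_line f hdiff a c
  have hgc : ConvexOn ℝ Set.univ (fun s : ℝ => f (a + s • c)) := by
    have h := hconv.comp_affineMap (AffineMap.lineMap a b)
    simp only [Set.preimage_univ] at h
    have heq : (fun s : ℝ => f (a + s • c)) = f ∘ (AffineMap.lineMap a b) := by
      funext s
      simp [Function.comp, AffineMap.lineMap_apply_module', hc, add_comm]
    rw [heq]
    exact h
  have hslope := hgc.le_slope_of_hasDerivWithinAt_Ioi (Set.mem_univ (0:ℝ)) (Set.mem_univ (1:ℝ))
    one_pos ((hg 0).hasDerivWithinAt)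
  rw [slope_def_field] at hslope
  simp only [zero_smul, add_zero, one_smul] at hslope
  have hab : a + c = b := by simp [hc]
  rw [hab] at hslope
  norm_num at hslope
  have hfd : ⟪gradient f a, c⟫ = fderiv ℝ f a c := InnerProductSpace.toDual_symm_apply
  linarith

end gen

lemma block_descent {p : ℕ} {d : Fin p → ℕ} {L : Fin p → ℝ} {f : Sp d → ℝ}
    (hf : IsCoordSmooth d L f) (ℓ : Fin p) (w : Sp d) (h : Blk d ℓ) :
    f (w + inj d ℓ h) ≤ f w + ⟪gradient f w ℓ, h⟫ + L ℓ / 2 * ‖h‖ ^ 2 := by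
  obtain ⟨hconv, hdiff, hlip⟩ := hf
  set c : Sp d := inj d ℓ h with hcdef
  have hφ : ∀ t : ℝ, HasDerivAt (fun s : ℝ => f (w + s • c))
      ⟪gradient f (w + t • c) ℓ, h⟫ t := by
    intro t
    have h1 := hasDerivAt_line f hdiff w c t
    have h2 : ⟪gradient f (w + t • c), c⟫ = ⟪gradient f (w + t • c) ℓ, h⟫ := by
      rw [real_inner_comm, inner_inj, real_inner_comm]
    rwa [h2] at h1
  have hlip' : ∀ t : ℝ, ⟪gradient f (w + t • c) ℓ, h⟫ - ⟪gradient f w ℓ, h⟫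
      ≤ L ℓ * ‖h‖ ^ 2 * |t| := by
    intro t
    have h1 : w + t • c = w + inj d ℓ (t • h) := by rw [inj_smul]
    have h2 := hlip ℓ w (t • h)
    rw [← h1] at h2
    calc ⟪gradient f (w + t • c) ℓ, h⟫ - ⟪gradient f w ℓ, h⟫
        = ⟪gradient f (w + t • c) ℓ - gradient f w ℓ, h⟫ := by rw [inner_sub_left]
      _ ≤ ‖gradient f (w + t • c) ℓ - gradient f w ℓ‖ * ‖h‖ := real_inner_le_norm _ _
      _ ≤ (L ℓ * ‖t • h‖) * ‖h‖ := mul_le_mul_of_nonneg_right h2 (norm_nonneg _)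
      _ = L ℓ * ‖h‖ ^ 2 * |t| := by rw [norm_smul]; simp [Real.norm_eq_abs]; ring
  set G : ℝ := ⟪gradient f w ℓ, h⟫ with hGdef
  set ψ : ℝ → ℝ := fun t => f w + t * G + L ℓ / 2 * ‖h‖ ^ 2 * t ^ 2 - f (w + t • c) with hψdef
  have hψ : ∀ t, HasDerivAt ψ
      (G + L ℓ * ‖h‖ ^ 2 * t - ⟪gradient f (w + t • c) ℓ, h⟫) t := by
    intro t
    have hA : HasDerivAt (fun t : ℝ => f w + t * G + L ℓ / 2 * ‖h‖ ^ 2 * t ^ 2)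
        (G + L ℓ * ‖h‖ ^ 2 * t) t := by
      have hB : HasDerivAt (fun t : ℝ => f w + t * G) G t := by
        simpa using ((hasDerivAt_id t).mul_const G).const_add (f w)
      have hC : HasDerivAt (fun t : ℝ => L ℓ / 2 * ‖h‖ ^ 2 * t ^ 2)
          (L ℓ / 2 * ‖h‖ ^ 2 * (2 * t)) t := by
        simpa using (hasDerivAt_pow 2 t).const_mul (L ℓ / 2 * ‖h‖ ^ 2)
      have := hB.add hC
      exact this.congr_deriv (by ring)
    exact hA.sub (hφ t)
  have hmono : MonotoneOn ψ (Set.Icc (0:ℝ) 1) := by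
    apply monotoneOn_of_deriv_nonneg (convex_Icc 0 1)
    · exact (Differentiable.continuous (fun t => (hψ t).differentiableAt)).continuousOn
    · exact fun t _ => ((hψ t).differentiableAt).differentiableWithinAt
    · intro t ht
      rw [interior_Icc] at ht
      rw [(hψ t).deriv]
      have h3 := hlip' t
      rw [abs_of_pos ht.1] at h3
      linarith
  have h01 := hmono (Set.left_mem_Icc.2 zero_le_one) (Set.right_mem_Icc.2 zero_le_one) zero_le_one
  have hψ0 : ψ 0 = 0 := by simp [hψdef]
  have hψ1 : ψ 1 = f w + G + L ℓ / 2 * ‖h‖ ^ 2 - f (w + c) := by simp [hψdef]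
  rw [hψ0, hψ1] at h01
  linarith

lemma theta_pos_le_one (p : ℕ) (hp : 0 < p) (θ : ℕ → ℝ) (hθ0 : θ 0 = 1 / p)
    (hθ : ∀ i, θ (i+1) = (Real.sqrt (θ i ^ 4 + 4 * θ i ^ 2) - θ i ^ 2) / 2) :
    ∀ i, 0 < θ i ∧ θ i ≤ 1 := by
  intro i
  induction i with
  | zero =>
    rw [hθ0]
    constructor
    · positivity
    · rw [div_le_one (by positivity)]
      exact_mod_cast hp
  | succ i ih =>
    obtain ⟨h1, h2⟩ := ih
    have ha : (0:ℝ) < θ i ^ 2 := by positivity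
    have harg : (0:ℝ) ≤ θ i ^ 4 + 4 * θ i ^ 2 := by positivity
    have hs2 : Real.sqrt (θ i ^ 4 + 4 * θ i ^ 2) ^ 2 = θ i ^ 4 + 4 * θ i ^ 2 :=
      Real.sq_sqrt harg
    have hs0 : 0 ≤ Real.sqrt (θ i ^ 4 + 4 * θ i ^ 2) := Real.sqrt_nonneg _
    constructor
    · rw [hθ i]
      have : θ i ^ 2 < Real.sqrt (θ i ^ 4 + 4 * θ i ^ 2) := by
        nlinarith
      linarith
    · rw [hθ i]
      have : Real.sqrt (θ i ^ 4 + 4 * θ i ^ 2) < θ i ^ 2 + 2 := by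
        nlinarith
      linarith

lemma theta_rec (θ : ℕ → ℝ) (hpos : ∀ i, 0 < θ i)
    (hθ : ∀ i, θ (i+1) = (Real.sqrt (θ i ^ 4 + 4 * θ i ^ 2) - θ i ^ 2) / 2) (i : ℕ) :
    θ (i+1) ^ 2 = θ i ^ 2 * (1 - θ (i+1)) := by
  have harg : (0:ℝ) ≤ θ i ^ 4 + 4 * θ i ^ 2 := by positivity
  have hs2 : Real.sqrt (θ i ^ 4 + 4 * θ i ^ 2) ^ 2 = θ i ^ 4 + 4 * θ i ^ 2 :=
    Real.sq_sqrt harg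
  rw [hθ i]
  nlinarith [hs2]

lemma theta_inv_bound (p : ℕ) (hp : 0 < p) (θ : ℕ → ℝ) (hθ0 : θ 0 = 1 / p)
    (hpos : ∀ i, 0 < θ i)
    (hrec : ∀ i, θ (i+1) ^ 2 = θ i ^ 2 * (1 - θ (i+1))) :
    ∀ i, (p:ℝ) + i / 2 ≤ 1 / θ i := by
  intro i
  induction i with
  | zero => rw [hθ0]; simp [one_div, inv_inv]  -- 1/(1/p) = p
  | succ i ih =>
    have hA : 0 < θ i := hpos i
    have hB : 0 < θ (i+1) := hpos (i+1)
    -- monotone: θ (i+1) ≤ θ i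
    have hmono : θ (i+1) ≤ θ i := by nlinarith [hrec i]
    -- 1/θ(i+1) ≥ 1/θ i + 1/2
    have hkey : 1 / θ i + 1 / 2 ≤ 1 / θ (i+1) := by
      set A := 1 / θ i with hAdef
      set B := 1 / θ (i+1) with hBdef
      have hA' : 0 < A := by positivity
      have hB' : 0 < B := by positivity
      have hBA : A ≤ B := by
        rw [hAdef, hBdef]
        exact one_div_le_one_div_of_le hB hmono
      have hid : B ^ 2 - B = A ^ 2 := by
        have h := hrec i
        rw [hAdef, hBdef]
        field_simp
        nlinarith [h]
      nlinarith [mul_pos hB' hB']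
    have : ((i:ℝ)+1)/2 = (i:ℝ)/2 + 1/2 := by ring
    push_cast
    linarith

lemma arith_step (pR t a b s1 s2 D : ℝ) (ht0 : 0 < t) (ht1 : t ≤ 1) (hpR : 0 ≤ pR)
    (hs1 : a - b ≤ s1) (hs2 : a ≤ s2) :
    pR/t^2*a - pR/t*((1-t)/t*s1 + s2) + pR^3/2*D ≤ pR*((1-t)/t^2*b + pR^2/2*D) := by
  have h1 : (1-t)*(a-b) ≤ (1-t)*s1 := mul_le_mul_of_nonneg_left hs1 (by linarith)
  have h2 : t*a ≤ t*s2 := mul_le_mul_of_nonneg_left hs2 (le_of_lt ht0)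
  have key : a - ((1-t)*s1 + t*s2) ≤ (1-t)*b := by nlinarith
  have ht : t ≠ 0 := ne_of_gt ht0
  have e1 : pR/t^2*a - pR/t*((1-t)/t*s1 + s2) = pR/t^2*(a - ((1-t)*s1 + t*s2)) := by
    field_simp
  have e2 : pR*((1-t)/t^2*b + pR^2/2*D) = pR/t^2*((1-t)*b) + pR^3/2*D := by
    field_simp
  rw [e1, e2]
  have h3 := mul_le_mul_of_nonneg_left key (div_nonneg hpR (le_of_lt (pow_pos ht0 2)))
  linarith

lemma gradient_min_zero {p : ℕ} {d : Fin p → ℕ} {f : Sp d → ℝ}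
    (hdiff : Differentiable ℝ f) (xs : Sp d) (hmin : IsMinOn f Set.univ xs) :
    gradient f xs = 0 := by
  have hloc : IsLocalMin f xs := hmin.isLocalMin Filter.univ_mem
  have hfz : fderiv ℝ f xs = 0 := hloc.fderiv_eq_zero
  unfold gradient
  rw [hfz]
  simp

lemma min_quadratic_bound {p : ℕ} (hp : 0 < p) {d : Fin p → ℕ} {L : Fin p → ℝ} {f : Sp d → ℝ}
    (hf : IsCoordSmooth d L f) (xs : Sp d) (hmin : IsMinOn f Set.univ xs) (v : Sp d) :
    f v ≤ f xs + (p:ℝ)/2 * ∑ ℓ, L ℓ * ‖v ℓ - xs ℓ‖ ^ 2 := by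
  obtain ⟨hconv, hdiff, -⟩ := id hf
  have hgrad0 : gradient f xs = 0 := gradient_min_zero hdiff xs hmin
  set q : Fin p → Sp d := fun ℓ => xs + (p:ℝ) • inj d ℓ (v ℓ - xs ℓ) with hq
  have hcomb : ∑ ℓ, ((p:ℝ))⁻¹ • q ℓ = v := by
    rw [hq]
    have hp' : ((p:ℝ)) ≠ 0 := Nat.cast_ne_zero.2 hp.ne'
    have : ∀ ℓ, ((p:ℝ))⁻¹ • (xs + (p:ℝ) • inj d ℓ (v ℓ - xs ℓ))
        = ((p:ℝ))⁻¹ • xs + inj d ℓ (v ℓ - xs ℓ) := by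
      intro ℓ
      rw [smul_add, smul_smul, inv_mul_cancel₀ hp', one_smul]
    simp only [this]
    rw [Finset.sum_add_distrib, Finset.sum_const, Finset.card_univ, Fintype.card_fin]
    have hsum : ∑ ℓ, inj d ℓ ((v - xs) ℓ) = v - xs := sum_inj d (v - xs)
    have hvs : ∀ ℓ, (v : Sp d) ℓ - xs ℓ = (v - xs) ℓ := fun ℓ => rfl
    simp only [hvs, hsum]
    rw [← Nat.cast_smul_eq_nsmul ℝ, smul_smul, mul_inv_cancel₀ hp', one_smul]
    abel
  have hjensen : f v ≤ ∑ ℓ, ((p:ℝ))⁻¹ • f (q ℓ) := by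
    rw [← hcomb]
    apply hconv.map_sum_le
    · intro i _; positivity
    · rw [Finset.sum_const, Finset.card_univ, Fintype.card_fin, nsmul_eq_mul]
      field_simp
    · intro i _; trivial
  have hquad : ∀ ℓ, f (q ℓ) ≤ f xs + L ℓ * (p:ℝ)^2 / 2 * ‖v ℓ - xs ℓ‖ ^ 2 := by
    intro ℓ
    have h1 : q ℓ = xs + inj d ℓ ((p:ℝ) • (v ℓ - xs ℓ)) := by rw [hq, inj_smul]
    have h2 := block_descent hf ℓ xs ((p:ℝ) • (v ℓ - xs ℓ))
    rw [← h1] at h2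
    have h3 : gradient f xs ℓ = 0 := by rw [hgrad0]; rfl
    rw [h3] at h2
    simp only [inner_zero_left, add_zero, zero_add] at h2
    calc f (q ℓ) ≤ f xs + 0 + L ℓ / 2 * ‖(p:ℝ) • (v ℓ - xs ℓ)‖ ^ 2 := by
          simpa using h2
      _ = f xs + L ℓ * (p:ℝ)^2 / 2 * ‖v ℓ - xs ℓ‖ ^ 2 := by
          rw [norm_smul]
          simp [Real.norm_eq_abs, mul_pow, sq_abs]
          ring
  calc f v ≤ ∑ ℓ, ((p:ℝ))⁻¹ • f (q ℓ) := hjensen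
    _ ≤ ∑ ℓ, ((p:ℝ))⁻¹ * (f xs + L ℓ * (p:ℝ)^2 / 2 * ‖v ℓ - xs ℓ‖ ^ 2) := by
        apply Finset.sum_le_sum
        intro ℓ _
        rw [smul_eq_mul]
        have : (0:ℝ) ≤ ((p:ℝ))⁻¹ := by positivity
        exact mul_le_mul_of_nonneg_left (hquad ℓ) this
    _ = f xs + (p:ℝ)/2 * ∑ ℓ, L ℓ * ‖v ℓ - xs ℓ‖ ^ 2 := by
        have hp' : ((p:ℝ)) ≠ 0 := Nat.cast_ne_zero.2 hp.ne'
        rw [Finset.mul_sum]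
        rw [Finset.sum_congr rfl (fun ℓ _ => by ring : ∀ ℓ ∈ Finset.univ,
          ((p:ℝ))⁻¹ * (f xs + L ℓ * (p:ℝ)^2 / 2 * ‖v ℓ - xs ℓ‖ ^ 2)
          = ((p:ℝ))⁻¹ * f xs + (p:ℝ)/2 * (L ℓ * ‖v ℓ - xs ℓ‖ ^ 2) * ((p:ℝ) * ((p:ℝ))⁻¹))]
        rw [Finset.sum_add_distrib, Finset.sum_const, Finset.card_univ, Fintype.card_fin]
        rw [mul_inv_cancel₀ hp']
        rw [nsmul_eq_mul]
        field_simp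

lemma key_step {p : ℕ} (hp : 0 < p) {d : Fin p → ℕ} {L : Fin p → ℝ} (hL : ∀ ℓ, 0 < L ℓ)
    {f : Sp d → ℝ} (hf : IsCoordSmooth d L f) (xs : Sp d)
    (t : ℝ) (ht0 : 0 < t) (ht1 : t ≤ 1) (v u : Sp d) :
    ∑ ℓ, ((1 / t ^ 2) * (f (((1-t) • v + t • u)
          - (L ℓ)⁻¹ • inj d ℓ (gradient f ((1-t) • v + t • u) ℓ)) - f xs)
       + (p:ℝ) ^ 2 / 2 * ∑ j, L j * ‖(u - ((p:ℝ) * t * L ℓ)⁻¹ •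
            inj d ℓ (gradient f ((1-t) • v + t • u) ℓ)) j - xs j‖ ^ 2)
    ≤ (p:ℝ) * ((1 - t) / t ^ 2 * (f v - f xs)
        + (p:ℝ) ^ 2 / 2 * ∑ j, L j * ‖u j - xs j‖ ^ 2) := by
  obtain ⟨hconv, hdiff, -⟩ := id hf
  set w : Sp d := (1-t) • v + t • u with hw
  set g : Sp d := gradient f w with hg
  set D : ℝ := ∑ j, L j * ‖u j - xs j‖ ^ 2 with hD
  have hpR : (0:ℝ) < p := by exact_mod_cast hp
  -- per-ℓ descent
  have hdesc : ∀ ℓ, f (w - (L ℓ)⁻¹ • inj d ℓ (g ℓ)) ≤ f w - (L ℓ)⁻¹ / 2 * ‖g ℓ‖ ^ 2 := by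
    intro ℓ
    have h1 := block_descent hf ℓ w ((-(L ℓ)⁻¹) • (g ℓ))
    rw [inj_smul] at h1
    have h2 : w + (-(L ℓ)⁻¹) • inj d ℓ (g ℓ) = w - (L ℓ)⁻¹ • inj d ℓ (g ℓ) := by
      rw [neg_smul, ← sub_eq_add_neg]
    rw [h2] at h1
    have h3 : ⟪gradient f w ℓ, (-(L ℓ)⁻¹) • (g ℓ)⟫ = -(L ℓ)⁻¹ * ‖g ℓ‖ ^ 2 := by
      rw [real_inner_smul_right, ← hg, real_inner_self_eq_norm_sq]
    rw [h3] at h1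
    have h4 : ‖(-(L ℓ)⁻¹) • (g ℓ)‖ ^ 2 = (L ℓ)⁻¹ ^ 2 * ‖g ℓ‖ ^ 2 := by
      rw [norm_smul]
      simp [Real.norm_eq_abs, mul_pow, sq_abs]
    rw [h4] at h1
    have hLℓ : (L ℓ) ≠ 0 := ne_of_gt (hL ℓ)
    have : f w + -(L ℓ)⁻¹ * ‖g ℓ‖ ^ 2 + L ℓ / 2 * ((L ℓ)⁻¹ ^ 2 * ‖g ℓ‖ ^ 2)
        = f w - (L ℓ)⁻¹ / 2 * ‖g ℓ‖ ^ 2 := by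
      field_simp
      ring
    linarith [h1, le_of_eq this]
  -- per-ℓ combined bound
  have hterm : ∀ ℓ, (1 / t ^ 2) * (f (w - (L ℓ)⁻¹ • inj d ℓ (g ℓ)) - f xs)
       + (p:ℝ) ^ 2 / 2 * ∑ j, L j * ‖(u - ((p:ℝ) * t * L ℓ)⁻¹ • inj d ℓ (g ℓ)) j - xs j‖ ^ 2
      ≤ (1 / t ^ 2) * (f w - f xs) + (p:ℝ) ^ 2 / 2 * D
        - (p:ℝ) / t * ⟪g ℓ, u ℓ - xs ℓ⟫ := by
    intro ℓ
    have hLℓ : (0:ℝ) < L ℓ := hL ℓ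
    have hDu := Dq_update L xs u ℓ (((p:ℝ) * t * L ℓ)⁻¹) (g ℓ)
    have hf1 := hdesc ℓ
    have hmul : (1 / t^2) * (f (w - (L ℓ)⁻¹ • inj d ℓ (g ℓ)) - f xs)
        ≤ (1 / t^2) * (f w - (L ℓ)⁻¹/2 * ‖g ℓ‖^2 - f xs) := by
      apply mul_le_mul_of_nonneg_left _ (by positivity)
      linarith
    have hexp : (p:ℝ)^2/2 * ((∑ j, L j * ‖u j - xs j‖ ^ 2)
          - 2 * ((p:ℝ) * t * L ℓ)⁻¹ * L ℓ * ⟪g ℓ, u ℓ - xs ℓ⟫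
          + (((p:ℝ) * t * L ℓ)⁻¹) ^ 2 * L ℓ * ‖g ℓ‖ ^ 2)
        = (p:ℝ)^2/2 * D - (p:ℝ)/t * ⟪g ℓ, u ℓ - xs ℓ⟫
          + (1/t^2) * ((L ℓ)⁻¹/2 * ‖g ℓ‖^2) := by
      rw [← hD]
      have hLℓ' : (L ℓ) ≠ 0 := ne_of_gt hLℓ
      have ht' : t ≠ 0 := ne_of_gt ht0
      have hp' : ((p:ℝ)) ≠ 0 := ne_of_gt hpR
      field_simp
    rw [hDu, hexp]
    linarith
  have hip : ∀ ℓ : Fin p, ⟪g ℓ, u ℓ - xs ℓ⟫ = ⟪g ℓ, (u - xs) ℓ⟫ := fun ℓ => rfl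
  have hinner : ⟪g, u - xs⟫ = ∑ ℓ, ⟪g ℓ, u ℓ - xs ℓ⟫ := by
    rw [PiLp.inner_apply]
    exact Finset.sum_congr rfl (fun ℓ _ => (hip ℓ).symm)
  have hsum : ∑ ℓ, ((1 / t ^ 2) * (f (w - (L ℓ)⁻¹ • inj d ℓ (g ℓ)) - f xs)
       + (p:ℝ) ^ 2 / 2 * ∑ j, L j * ‖(u - ((p:ℝ) * t * L ℓ)⁻¹ • inj d ℓ (g ℓ)) j - xs j‖ ^ 2)
      ≤ (p:ℝ) * ((1 / t ^ 2) * (f w - f xs) + (p:ℝ) ^ 2 / 2 * D)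
        - (p:ℝ) / t * ⟪g, u - xs⟫ := by
    calc ∑ ℓ, ((1 / t ^ 2) * (f (w - (L ℓ)⁻¹ • inj d ℓ (g ℓ)) - f xs)
         + (p:ℝ) ^ 2 / 2 * ∑ j, L j * ‖(u - ((p:ℝ) * t * L ℓ)⁻¹ • inj d ℓ (g ℓ)) j - xs j‖ ^ 2)
        ≤ ∑ ℓ : Fin p, ((1 / t ^ 2) * (f w - f xs) + (p:ℝ) ^ 2 / 2 * D
            - (p:ℝ) / t * ⟪g ℓ, u ℓ - xs ℓ⟫) :=
          Finset.sum_le_sum (fun ℓ _ => hterm ℓ)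
      _ = (p:ℝ) * ((1 / t ^ 2) * (f w - f xs) + (p:ℝ) ^ 2 / 2 * D)
            - (p:ℝ) / t * ⟪g, u - xs⟫ := by
          rw [Finset.sum_sub_distrib, Finset.sum_const, Finset.card_univ, Fintype.card_fin,
            ← Finset.mul_sum, hinner, nsmul_eq_mul]
  have hs1 : f w - f v ≤ ⟪g, w - v⟫ := by
    have h := grad_convex_le hconv hdiff w v
    have h2 : ⟪gradient f w, v - w⟫ = -⟪g, w - v⟫ := by
      rw [show v - w = -(w - v) by abel, inner_neg_right, hg]
    rw [h2] at h
    linarith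
  have hs2 : f w - f xs ≤ ⟪g, w - xs⟫ := by
    have h := grad_convex_le hconv hdiff w xs
    have h2 : ⟪gradient f w, xs - w⟫ = -⟪g, w - xs⟫ := by
      rw [show xs - w = -(w - xs) by abel, inner_neg_right, hg]
    rw [h2] at h
    linarith
  have hdec : ⟪g, u - xs⟫ = (1-t)/t * ⟪g, w - v⟫ + ⟪g, w - xs⟫ := by
    have h1 : u - xs = (u - w) + (w - xs) := by abel
    have h2 : u - w = (1-t) • (u - v) := by rw [hw]; module
    have h3 : w - v = t • (u - v) := by rw [hw]; module
    rw [h1, inner_add_right, h2, h3, real_inner_smul_right, real_inner_smul_right]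
    have ht' : t ≠ 0 := ne_of_gt ht0
    congr 1
    generalize (inner ℝ (g : Sp d) (u - v) : ℝ) = r
    field_simp
  have harith := arith_step (p:ℝ) t (f w - f xs) (f v - f xs) ⟪g, w - v⟫ ⟪g, w - xs⟫ D
    ht0 ht1 (le_of_lt hpR) (by linarith) hs2
  have e5 : (p:ℝ) * ((1 / t ^ 2) * (f w - f xs) + (p:ℝ) ^ 2 / 2 * D)
        - (p:ℝ) / t * ((1-t)/t * ⟪g, w - v⟫ + ⟪g, w - xs⟫)
      = (p:ℝ)/t^2*(f w - f xs)
        - (p:ℝ)/t*((1-t)/t*⟪g, w - v⟫ + ⟪g, w - xs⟫) + (p:ℝ)^3/2*D := by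
    ring
  calc ∑ ℓ, ((1 / t ^ 2) * (f (w - (L ℓ)⁻¹ • inj d ℓ (g ℓ)) - f xs)
       + (p:ℝ) ^ 2 / 2 * ∑ j, L j * ‖(u - ((p:ℝ) * t * L ℓ)⁻¹ • inj d ℓ (g ℓ)) j - xs j‖ ^ 2)
      ≤ (p:ℝ) * ((1 / t ^ 2) * (f w - f xs) + (p:ℝ) ^ 2 / 2 * D)
        - (p:ℝ) / t * ⟪g, u - xs⟫ := hsum
    _ ≤ (p:ℝ) * ((1 - t) / t ^ 2 * (f v - f xs) + (p:ℝ) ^ 2 / 2 * D) := by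
        rw [hdec, e5]
        linarith

lemma update_sum {n m : ℕ} (i0 : Fin n) (W : (Fin n → Fin m) → ℝ) :
    ∑ σ : Fin n → Fin m, ∑ ℓ : Fin m, W (Function.update σ i0 ℓ) = m * ∑ σ, W σ := by
  have hφ : Function.Involutive (fun q : (Fin n → Fin m) × Fin m =>
      (Function.update q.1 i0 q.2, q.1 i0)) := by
    intro q
    refine Prod.ext ?_ ?_
    · simp [Function.update_idem, Function.update_eq_self]
    · simp
  have hb := Fintype.sum_bijective _ hφ.bijective
      (fun q : (Fin n → Fin m) × Fin m => W (Function.update q.1 i0 q.2))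
      (fun q => W q.1) (fun q => rfl)
  rw [Fintype.sum_prod_type, Fintype.sum_prod_type] at hb
  simp only [Finset.sum_const, Finset.card_univ, Fintype.card_fin, nsmul_eq_mul] at hb
  rw [hb, ← Finset.mul_sum]

theorem racd_expected_accelerated_rate {p : ℕ} (hp : 0 < p) {d : Fin p → ℕ}
    (L : Fin p → ℝ) (hL : ∀ ℓ, 0 < L ℓ) (f : Sp d → ℝ) (hf : IsCoordSmooth d L f)
    (x₀ xstar : Sp d) (hmin : IsMinOn f Set.univ xstar)
    (N : ℕ) (θ : ℕ → ℝ) (hθ0 : θ 0 = 1 / (p : ℝ))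
    (hθ : ∀ i : ℕ, θ (i + 1) = (Real.sqrt (θ i ^ 4 + 4 * θ i ^ 2) - θ i ^ 2) / 2)
    -- for each block sequence `σ`, the iterates `x σ`, `z σ`, `y σ` of accelerated
    -- coordinate descent along `σ`, started at `x₀`, with step sizes `1/L_ℓ`
    (x z y : (Fin N → Fin p) → ℕ → Sp d)
    (hx0 : ∀ σ, x σ 0 = x₀) (hz0 : ∀ σ, z σ 0 = x₀)
    (hy : ∀ σ, ∀ i < N, y σ i = (1 - θ i) • x σ i + θ i • z σ i)
    (hz : ∀ σ : Fin N → Fin p, ∀ i : ℕ, ∀ hi : i < N, z σ (i + 1) = z σ i -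
      ((p : ℝ) * θ i * L (σ ⟨i, hi⟩))⁻¹ • inj d (σ ⟨i, hi⟩) (gradient f (y σ i) (σ ⟨i, hi⟩)))
    (hx : ∀ σ, ∀ i < N, x σ (i + 1) = y σ i + ((p : ℝ) * θ i) • (z σ (i + 1) - z σ i)) :
    ((p : ℝ) ^ N)⁻¹ * ∑ σ : Fin N → Fin p, (f (x σ N) - f xstar) ≤
      4 * (p : ℝ) ^ 2 / ((N : ℝ) - 1 + 2 * (p : ℝ)) ^ 2 *
        ((1 - 1 / (p : ℝ)) * (f x₀ - f xstar) + 1 / 2 * ∑ ℓ, L ℓ * ‖x₀ ℓ - xstar ℓ‖ ^ 2) := by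
  have hpR : (0:ℝ) < p := by exact_mod_cast hp
  have hp1 : (1:ℝ) ≤ p := by exact_mod_cast hp
  have hθp := theta_pos_le_one p hp θ hθ0 hθ
  have hθpos : ∀ i, 0 < θ i := fun i => (hθp i).1
  have hθ1 : ∀ i, θ i ≤ 1 := fun i => (hθp i).2
  have hθrec := theta_rec θ hθpos hθ
  have hθinv := theta_inv_bound p hp θ hθ0 hθpos hθrec
  have hF0 : 0 ≤ f x₀ - f xstar := by
    have := hmin (Set.mem_univ x₀); simpa using this
  have hD0 : 0 ≤ ∑ ℓ, L ℓ * ‖x₀ ℓ - xstar ℓ‖ ^ 2 :=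
    Finset.sum_nonneg (fun ℓ _ => mul_nonneg (hL ℓ).le (by positivity))
  set R2 : ℝ := (1 - 1 / (p : ℝ)) * (f x₀ - f xstar)
      + 1 / 2 * ∑ ℓ, L ℓ * ‖x₀ ℓ - xstar ℓ‖ ^ 2 with hR2
  have hR2nn : 0 ≤ R2 := by
    have h1 : (0:ℝ) ≤ 1 - 1/(p:ℝ) := by
      have : 1/(p:ℝ) ≤ 1 := by
        rw [div_le_one hpR]; exact hp1
      linarith
    have h2 := mul_nonneg h1 hF0
    rw [hR2]
    linarith [hD0]
  rcases Nat.eq_zero_or_pos N with hN0 | hNpos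
  · -- N = 0 case
    subst hN0
    have hcard : (Finset.univ : Finset (Fin 0 → Fin p)) = {fun i => i.elim0} := by
      apply Finset.eq_singleton_iff_unique_mem.2
      constructor
      · exact Finset.mem_univ _
      · intro σ _
        funext j
        exact j.elim0
    rw [hcard, Finset.sum_singleton, hx0]
    have hquad := min_quadratic_bound hp hf xstar hmin x₀
    have hhalf : f x₀ - f xstar ≤ (p:ℝ)/2 * ∑ ℓ, L ℓ * ‖x₀ ℓ - xstar ℓ‖ ^ 2 := by linarith
    have hc : (0:ℝ) < ((0:ℕ):ℝ) - 1 + 2 * p := by push_cast; linarith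
    simp only [pow_zero, inv_one, one_mul]
    rw [hR2]
    rw [div_mul_eq_mul_div, le_div_iff₀ (by positivity)]
    push_cast
    have e : 4*(p:ℝ)^2*((1 - 1/(p:ℝ))*(f x₀ - f xstar)
          + 1/2 * ∑ ℓ, L ℓ * ‖x₀ ℓ - xstar ℓ‖ ^ 2)
        = 4*(p:ℝ)^2*(f x₀ - f xstar) - 4*(p:ℝ)*(f x₀ - f xstar)
          + 2*(p:ℝ)^2*(∑ ℓ, L ℓ * ‖x₀ ℓ - xstar ℓ‖ ^ 2) := by
      field_simp
      ring
    nlinarith [e, mul_nonneg hF0 (by linarith : (0:ℝ) ≤ 4*(p:ℝ)-1),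
      mul_le_mul_of_nonneg_left hhalf (by positivity : (0:ℝ) ≤ 2*(p:ℝ)), hF0, hD0]
  · -- N ≥ 1
    obtain ⟨M, rfl⟩ : ∃ M, N = M + 1 := ⟨N - 1, (Nat.succ_pred_eq_of_pos hNpos).symm⟩
    set Dq : Sp d → ℝ := fun v => ∑ j, L j * ‖v j - xstar j‖ ^ 2 with hDq
    set Vv : (Fin (M+1) → Fin p) → ℕ → ℝ := fun σ i =>
      (1 - θ i) / θ i ^ 2 * (f (x σ i) - f xstar) + (p:ℝ)^2/2 * Dq (z σ i) with hVv
    have hcoAll : ∀ i, (1 - θ (i+1)) / θ (i+1) ^ 2 = 1 / θ i ^ 2 := by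
      intro i
      have h := hθrec i
      have h1 : θ i ≠ 0 := ne_of_gt (hθpos i)
      have h2 : θ (i+1) ≠ 0 := ne_of_gt (hθpos (i+1))
      field_simp
      linarith [h]
    have hdep : ∀ k, ∀ σ τ : Fin (M+1) → Fin p,
        (∀ j : Fin (M+1), (j:ℕ) < k → σ j = τ j) → k ≤ M+1 →
        x σ k = x τ k ∧ z σ k = z τ k := by
      intro k
      induction k with
      | zero => intro σ τ _ _; rw [hx0, hx0, hz0, hz0]; exact ⟨rfl, rfl⟩
      | succ k ih =>
        intro σ τ hagree hk
        have hkN : k < M+1 := hk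
        obtain ⟨hxk, hzk⟩ := ih σ τ (fun j hj => hagree j (Nat.lt_succ_of_lt hj)) hkN.le
        have hyk : y σ k = y τ k := by rw [hy σ k hkN, hy τ k hkN, hxk, hzk]
        have hσmust : σ ⟨k, hkN⟩ = τ ⟨k, hkN⟩ := hagree ⟨k, hkN⟩ (Nat.lt_succ_self k)
        have hzk1 : z σ (k+1) = z τ (k+1) := by
          rw [hz σ k hkN, hz τ k hkN, hσmust, hzk, hyk]
        refine ⟨?_, hzk1⟩
        rw [hx σ k hkN, hx τ k hkN, hyk, hzk1, hzk]
    have hstep : ∀ (i : ℕ) (hi : i < M+1) (σ : Fin (M+1) → Fin p),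
        ∑ ℓ, Vv (Function.update σ ⟨i, hi⟩ ℓ) (i+1) ≤ (p:ℝ) * Vv σ i := by
      intro i hi σ
      have hτfacts : ∀ ℓ : Fin p,
          x (Function.update σ ⟨i, hi⟩ ℓ) (i+1)
            = y σ i - (L ℓ)⁻¹ • inj d ℓ (gradient f (y σ i) ℓ)
          ∧ z (Function.update σ ⟨i, hi⟩ ℓ) (i+1)
            = z σ i - ((p:ℝ) * θ i * L ℓ)⁻¹ • inj d ℓ (gradient f (y σ i) ℓ) := by
        intro ℓ
        set τ : Fin (M+1) → Fin p := Function.update σ ⟨i, hi⟩ ℓ with hτ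
        have hagree : ∀ j : Fin (M+1), (j:ℕ) < i → τ j = σ j := by
          intro j hj
          apply Function.update_of_ne
          intro hje
          rw [hje] at hj
          exact absurd hj (lt_irrefl i)
        obtain ⟨hxτ, hzτ⟩ := hdep i τ σ hagree (le_of_lt hi)
        have hyτ : y τ i = y σ i := by rw [hy τ i hi, hy σ i hi, hxτ, hzτ]
        have hτi : τ ⟨i, hi⟩ = ℓ := Function.update_self _ _ _
        have hz1 : z τ (i+1)
            = z σ i - ((p:ℝ)*θ i*L ℓ)⁻¹ • inj d ℓ (gradient f (y σ i) ℓ) := by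
          rw [hz τ i hi, hτi, hzτ, hyτ]
        refine ⟨?_, hz1⟩
        rw [hx τ i hi, hz1, hzτ, hyτ]
        have habel : z σ i - ((p:ℝ)*θ i*L ℓ)⁻¹ • inj d ℓ (gradient f (y σ i) ℓ) - z σ i
            = -(((p:ℝ)*θ i*L ℓ)⁻¹ • inj d ℓ (gradient f (y σ i) ℓ)) := by abel
        rw [habel, smul_neg, smul_smul, ← sub_eq_add_neg]
        have hsc : ((p:ℝ) * θ i) * ((p:ℝ)*θ i*L ℓ)⁻¹ = (L ℓ)⁻¹ := by
          have h1 : θ i ≠ 0 := ne_of_gt (hθpos i)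
          have h2 : (p:ℝ) ≠ 0 := ne_of_gt hpR
          have h3 : L ℓ ≠ 0 := ne_of_gt (hL ℓ)
          field_simp
        rw [hsc]
      have hks := key_step hp hL hf xstar (θ i) (hθpos i) (hθ1 i) (x σ i) (z σ i)
      rw [← hy σ i hi] at hks
      calc ∑ ℓ, Vv (Function.update σ ⟨i, hi⟩ ℓ) (i+1)
          = ∑ ℓ, ((1 / θ i ^ 2) * (f (y σ i
                - (L ℓ)⁻¹ • inj d ℓ (gradient f (y σ i) ℓ)) - f xstar)
             + (p:ℝ)^2/2 * ∑ j, L j * ‖(z σ i - ((p:ℝ)*θ i*L ℓ)⁻¹ •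
                  inj d ℓ (gradient f (y σ i) ℓ)) j - xstar j‖^2) := by
            apply Finset.sum_congr rfl
            intro ℓ _
            simp only [hVv, hDq]
            rw [(hτfacts ℓ).1, (hτfacts ℓ).2, hcoAll i]
        _ ≤ (p:ℝ) * ((1 - θ i)/θ i^2 * (f (x σ i) - f xstar)
              + (p:ℝ)^2/2 * ∑ j, L j * ‖z σ i j - xstar j‖^2) := hks
        _ = (p:ℝ) * Vv σ i := by simp only [hVv, hDq]
    have hΦ : ∀ i, i ≤ M+1 → (∑ σ, Vv σ i) ≤ ∑ σ, Vv σ 0 := by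
      intro i
      induction i with
      | zero => intro _; exact le_refl _
      | succ i ih =>
        intro hi1
        have hiM : i < M+1 := hi1
        have h1 := update_sum (⟨i, hiM⟩ : Fin (M+1)) (fun σ => Vv σ (i+1))
        have h2 : ∑ σ : Fin (M+1) → Fin p, ∑ ℓ, Vv (Function.update σ ⟨i,hiM⟩ ℓ) (i+1)
            ≤ ∑ σ : Fin (M+1) → Fin p, (p:ℝ) * Vv σ i :=
          Finset.sum_le_sum (fun σ _ => hstep i hiM σ)
        rw [h1, ← Finset.mul_sum] at h2
        have h3 : (∑ σ, Vv σ (i+1)) ≤ ∑ σ, Vv σ i :=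
          le_of_mul_le_mul_left h2 hpR
        exact le_trans h3 (ih hiM.le)
    have hΦ0 : (∑ σ : Fin (M+1) → Fin p, Vv σ 0) = (p:ℝ)^(M+1) * ((p:ℝ)^2 * R2) := by
      have hconst : ∀ σ : Fin (M+1) → Fin p, Vv σ 0 = (p:ℝ)^2 * R2 := by
        intro σ
        simp only [hVv, hDq, hx0, hz0, hθ0, hR2]
        have hp' : (p:ℝ) ≠ 0 := ne_of_gt hpR
        field_simp
      rw [Finset.sum_congr rfl (fun σ _ => hconst σ), Finset.sum_const, Finset.card_univ]
      rw [Fintype.card_fun, Fintype.card_fin, Fintype.card_fin, nsmul_eq_mul]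
      push_cast
      ring
    have hDnn : ∀ σ (k : ℕ), (0:ℝ) ≤ Dq (z σ k) := by
      intro σ k
      simp only [hDq]
      exact Finset.sum_nonneg (fun j _ => mul_nonneg (hL j).le (by positivity))
    have hFnn : ∀ σ : Fin (M+1) → Fin p, 0 ≤ f (x σ (M+1)) - f xstar := by
      intro σ
      have := hmin (Set.mem_univ (x σ (M+1))); simpa using this
    have hlow : (1/θ M^2) * ∑ σ : Fin (M+1) → Fin p, (f (x σ (M+1)) - f xstar)
        ≤ ∑ σ, Vv σ (M+1) := by
      rw [Finset.mul_sum]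
      apply Finset.sum_le_sum
      intro σ _
      simp only [hVv]
      rw [hcoAll M]
      have h1 := hDnn σ (M+1)
      nlinarith [h1]
    have hchain : (1/θ M^2) * ∑ σ : Fin (M+1) → Fin p, (f (x σ (M+1)) - f xstar)
        ≤ (p:ℝ)^(M+1) * ((p:ℝ)^2 * R2) :=
      le_trans hlow (le_trans (hΦ (M+1) le_rfl) (le_of_eq hΦ0))
    have hθM0 : 0 < θ M := hθpos M
    have hM2p : (0:ℝ) < (M:ℝ) + 2*p := by positivity
    have hθM : θ M ≤ 2 / ((M:ℝ) + 2*p) := by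
      have h1 := hθinv M
      have h4 : ((M:ℝ)+2*p)/2 ≤ 1/θ M := by linarith
      rw [le_div_iff₀ hM2p]
      have h5 := mul_le_mul_of_nonneg_right h4 hθM0.le
      rw [one_div, inv_mul_cancel₀ (ne_of_gt hθM0)] at h5
      linarith
    have hθMsq : θ M^2 ≤ 4 / ((M:ℝ) + 2*p)^2 := by
      have := pow_le_pow_left₀ hθM0.le hθM 2
      calc θ M^2 ≤ (2 / ((M:ℝ) + 2*p))^2 := this
        _ = 4 / ((M:ℝ) + 2*p)^2 := by rw [div_pow]; norm_num
    have hS : (∑ σ : Fin (M+1) → Fin p, (f (x σ (M+1)) - f xstar))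
        ≤ θ M^2 * ((p:ℝ)^(M+1) * ((p:ℝ)^2 * R2)) := by
      have h6 := mul_le_mul_of_nonneg_left hchain (sq_nonneg (θ M))
      have he : θ M^2 * ((1/θ M^2) * ∑ σ : Fin (M+1) → Fin p, (f (x σ (M+1)) - f xstar))
          = ∑ σ : Fin (M+1) → Fin p, (f (x σ (M+1)) - f xstar) := by
        field_simp
      rw [he] at h6
      exact h6
    have hpow : (0:ℝ) < (p:ℝ)^(M+1) := by positivity
    calc ((p:ℝ)^(M+1))⁻¹ * ∑ σ : Fin (M+1) → Fin p, (f (x σ (M+1)) - f xstar)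
        ≤ ((p:ℝ)^(M+1))⁻¹ * (θ M^2 * ((p:ℝ)^(M+1) * ((p:ℝ)^2 * R2))) :=
          mul_le_mul_of_nonneg_left hS (by positivity)
      _ = θ M^2 * ((p:ℝ)^2 * R2) := by
          field_simp
      _ ≤ (4 / ((M:ℝ) + 2*p)^2) * ((p:ℝ)^2 * R2) :=
          mul_le_mul_of_nonneg_right hθMsq (by positivity)
      _ = 4 * (p:ℝ)^2 / ((↑(M+1) : ℝ) - 1 + 2*(p:ℝ))^2 * R2 := by
          push_cast
          ring_nf
      _ = 4 * (p:ℝ)^2 / ((↑(M+1) : ℝ) - 1 + 2*(p:ℝ))^2 *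
            ((1 - 1 / (p : ℝ)) * (f x₀ - f xstar)
              + 1 / 2 * ∑ ℓ, L ℓ * ‖x₀ ℓ - xstar ℓ‖ ^ 2) := by rw [hR2]
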